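/- Let f1(x; μ, τ) = (1/x)√(τ/(2π)) exp(−τ(log x − μ)²/2) for x > 0 be the lognormal density with parameters μ ∈ ℝ, τ > 0, and let f2(x; λ, κ) = (κ/λ)(x/λ)^{κ−1} exp(−(x/λ)^κ) for x > 0 be the Weibull density with parameters λ, κ > 0. Then D_KL(f1(·; μ, τ) ‖ f2(·; λ, κ)) = −μ + (1/2) log(τ/(2π)) − 1/2 − log κ + log λ − (κ − 1)(μ − log λ) + λ^{−κ} exp(κ²/(2τ) + μκ). -/

import Mathlib

open MeasureTheory Real Set Filter Topology

lemma gauss0 (b c : ℝ) : ∫ y : ℝ, Real.exp (-b*(y-c)^2) = Real.sqrt (π/b) := by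
  have h := integral_sub_right_eq_self (μ := volume) (fun y => Real.exp (-b*y^2)) c
  simp only [neg_mul] at h ⊢
  rw [h]
  simpa [neg_mul] using integral_gaussian b

lemma gauss1odd (b : ℝ) : ∫ y : ℝ, y * Real.exp (-b*y^2) = 0 := by
  have h := integral_neg_eq_self (fun y : ℝ => y * Real.exp (-b*y^2)) volume
  simp only [neg_sq, neg_mul, integral_neg] at h
  simp only [neg_mul]
  linarith

lemma gauss2half (b : ℝ) (hb : 0 < b) :
    ∫ y in Ioi (0:ℝ), y^2 * Real.exp (-b*y^2) = Real.sqrt (π/b)/(4*b) := by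
  have hderiv : ∀ x ∈ Ici (0:ℝ), HasDerivAt (fun x : ℝ => -(x/(2*b)) * Real.exp (-b*x^2))
      (x^2 * Real.exp (-b*x^2) - (1/(2*b)) * Real.exp (-b*x^2)) x := by
    intro x _
    have h1 : HasDerivAt (fun x : ℝ => -b*x^2) (-b*(2*x)) x := by
      simpa using ((hasDerivAt_pow 2 x).const_mul (-b))
    have h2 := h1.exp
    have h3 := (hasDerivAt_id x).div_const (2*b)
    have := (h3.neg.mul h2)
    refine this.congr_deriv ?_
    simp only [Pi.neg_apply, id]
    have hb0 : b ≠ 0 := hb.ne'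
    field_simp
    ring
  have hi2 : IntegrableOn (fun x : ℝ => x^2 * Real.exp (-b*x^2)) (Ioi 0) := by
    have := integrableOn_rpow_mul_exp_neg_mul_sq hb (s := 2) (by norm_num)
    simpa [Real.rpow_two] using this
  have hint : IntegrableOn (fun x : ℝ =>
      x^2 * Real.exp (-b*x^2) - (1/(2*b)) * Real.exp (-b*x^2)) (Ioi 0) :=
    hi2.sub (((integrable_exp_neg_mul_sq hb).integrableOn).const_mul _)
  have htend : Tendsto (fun x : ℝ => -(x/(2*b)) * Real.exp (-b*x^2)) atTop (𝓝 0) := by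
    have ho := rpow_mul_exp_neg_mul_sq_isLittleO_exp_neg hb 1
    have h0 : Tendsto (fun x : ℝ => x * Real.exp (-b*x^2)) atTop (𝓝 0) := by
      have h1 := ho.trans_tendsto
        (Real.tendsto_exp_atBot.comp (tendsto_id.const_mul_atTop_of_neg (by norm_num)))
      refine h1.congr' ?_
      filter_upwards [eventually_gt_atTop (0:ℝ)] with x hx
      rw [Real.rpow_one]
    have h2 := h0.const_mul (-(1/(2*b)))
    simp only [mul_zero] at h2
    refine h2.congr fun x => by ring
  have key := integral_Ioi_of_hasDerivAt_of_tendsto' hderiv hint htend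
  have hz : (0:ℝ) - (fun x : ℝ => -(x/(2*b)) * Real.exp (-b*x^2)) 0 = 0 := by simp
  rw [hz] at key
  have hsplit : ∫ x in Ioi (0:ℝ), (x^2 * Real.exp (-b*x^2) - (1/(2*b)) * Real.exp (-b*x^2))
      = (∫ x in Ioi (0:ℝ), x^2 * Real.exp (-b*x^2))
        - (1/(2*b)) * ∫ x in Ioi (0:ℝ), Real.exp (-b*x^2) := by
    rw [integral_sub hi2 (((integrable_exp_neg_mul_sq hb).integrableOn).const_mul _),
      integral_const_mul]
  rw [hsplit, integral_gaussian_Ioi b] at key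
  have hb' : (2*b) ≠ 0 := by positivity
  rw [sub_eq_zero] at key
  rw [key]
  field_simp
  ring

lemma gauss2 (b : ℝ) (hb : 0 < b) :
    ∫ y : ℝ, y^2 * Real.exp (-b*y^2) = Real.sqrt (π/b)/(2*b) := by
  have h := integral_comp_abs (f := fun t : ℝ => t^2 * Real.exp (-b*t^2))
  simp only [sq_abs] at h
  rw [h, gauss2half b hb]
  field_simp
  ring

lemma int_gauss (b c : ℝ) (hb : 0 < b) :
    Integrable (fun y : ℝ => Real.exp (-b*(y-c)^2)) := by
  have := (integrable_exp_neg_mul_sq hb).comp_sub_right c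
  simpa using this

lemma int_mul_gauss (b c : ℝ) (hb : 0 < b) :
    Integrable (fun y : ℝ => y * Real.exp (-b*(y-c)^2)) := by
  have h := ((integrable_mul_exp_neg_mul_sq hb).add
    ((integrable_exp_neg_mul_sq hb).const_mul c)).comp_sub_right c
  refine h.congr ?_
  filter_upwards with x
  show (x - c) * Real.exp (-b*(x-c)^2) + c * Real.exp (-b*(x-c)^2) = _
  ring

lemma int_sq_gauss (b c : ℝ) (hb : 0 < b) :
    Integrable (fun y : ℝ => (y-c)^2 * Real.exp (-b*(y-c)^2)) := by
  have h2 : Integrable (fun y : ℝ => y^2 * Real.exp (-b*y^2)) := by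
    have := integrable_rpow_mul_exp_neg_mul_sq hb (s := 2) (by norm_num)
    simpa [Real.rpow_two] using this
  simpa using h2.comp_sub_right c

lemma gauss_m1 (b c : ℝ) (hb : 0 < b) :
    ∫ y : ℝ, y * Real.exp (-b*(y-c)^2) = c * Real.sqrt (π/b) := by
  have h := integral_sub_right_eq_self (μ := volume)
    (fun y => (y + c) * Real.exp (-b*y^2)) c
  simp only [sub_add_cancel] at h
  rw [h, ← integral_gaussian b]
  rw [show (fun y : ℝ => (y + c) * Real.exp (-b*y^2))
      = fun y : ℝ => y * Real.exp (-b*y^2) + c * Real.exp (-b*y^2) from funext fun y => by ring]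
  rw [integral_add (integrable_mul_exp_neg_mul_sq hb)
    ((integrable_exp_neg_mul_sq hb).const_mul c), gauss1odd, integral_const_mul]
  simp [integral_gaussian]

lemma gauss_m2 (b c : ℝ) (hb : 0 < b) :
    ∫ y : ℝ, (y-c)^2 * Real.exp (-b*(y-c)^2) = Real.sqrt (π/b)/(2*b) := by
  have h := integral_sub_right_eq_self (μ := volume)
    (fun y => y^2 * Real.exp (-b*y^2)) c
  rw [h, gauss2 b hb]

lemma gauss_mgf (b c d : ℝ) (hb : 0 < b) :
    ∫ y : ℝ, Real.exp (-b*(y-c)^2 + d*y)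
      = Real.sqrt (π/b) * Real.exp (d^2/(4*b) + c*d) := by
  have key : ∀ y : ℝ, Real.exp (-b*(y-c)^2 + d*y)
      = Real.exp (d^2/(4*b) + c*d) * Real.exp (-b*(y-(c+d/(2*b)))^2) := by
    intro y
    rw [← Real.exp_add]
    congr 1
    field_simp
    ring
  simp_rw [key, integral_const_mul, gauss0]
  ring

lemma int_mgf (b c d : ℝ) (hb : 0 < b) :
    Integrable (fun y : ℝ => Real.exp (-b*(y-c)^2 + d*y)) := by
  have key : ∀ y : ℝ, Real.exp (-b*(y-c)^2 + d*y)
      = Real.exp (d^2/(4*b) + c*d) * Real.exp (-b*(y-(c+d/(2*b)))^2) := by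
    intro y
    rw [← Real.exp_add]
    congr 1
    field_simp
    ring
  simp_rw [key]
  exact (int_gauss b _ hb).const_mul _

lemma gauss_total (b c c0 c1 c2 d e : ℝ) (hb : 0 < b) :
    ∫ y : ℝ, Real.exp (-b*(y-c)^2) * (c0 + c1*y + c2*(y-c)^2 + Real.exp (d*y + e))
      = c0 * Real.sqrt (π/b) + c1 * (c * Real.sqrt (π/b))
        + c2 * (Real.sqrt (π/b)/(2*b))
        + Real.exp e * (Real.sqrt (π/b) * Real.exp (d^2/(4*b) + c*d)) := by
  have hfun : (fun y : ℝ => Real.exp (-b*(y-c)^2) * (c0 + c1*y + c2*(y-c)^2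
        + Real.exp (d*y + e)))
      = (fun y : ℝ => c0 * Real.exp (-b*(y-c)^2))
        + ((fun y : ℝ => c1 * (y * Real.exp (-b*(y-c)^2)))
        + ((fun y : ℝ => c2 * ((y-c)^2 * Real.exp (-b*(y-c)^2)))
        + fun y : ℝ => Real.exp e * Real.exp (-b*(y-c)^2 + d*y))) := by
    funext y
    simp only [Pi.add_apply]
    have hexp : Real.exp (-b*(y-c)^2) * Real.exp (d*y + e)
        = Real.exp e * Real.exp (-b*(y-c)^2 + d*y) := by
      rw [← Real.exp_add, ← Real.exp_add]; ring_nf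
    calc Real.exp (-b*(y-c)^2) * (c0 + c1*y + c2*(y-c)^2 + Real.exp (d*y + e))
        = c0 * Real.exp (-b*(y-c)^2) + (c1 * (y * Real.exp (-b*(y-c)^2))
          + (c2 * ((y-c)^2 * Real.exp (-b*(y-c)^2))
          + Real.exp (-b*(y-c)^2) * Real.exp (d*y + e))) := by ring
      _ = _ := by rw [hexp]
  rw [hfun, integral_add' ((int_gauss b c hb).const_mul c0)
      (((int_mul_gauss b c hb).const_mul c1).add
        (((int_sq_gauss b c hb).const_mul c2).add ((int_mgf b c d hb).const_mul _))),
    integral_add' ((int_mul_gauss b c hb).const_mul c1)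
      (((int_sq_gauss b c hb).const_mul c2).add ((int_mgf b c d hb).const_mul _)),
    integral_add' ((int_sq_gauss b c hb).const_mul c2) ((int_mgf b c d hb).const_mul _),
    integral_const_mul, integral_const_mul, integral_const_mul, integral_const_mul,
    gauss0, gauss_m1 b c hb, gauss_m2 b c hb, gauss_mgf b c d hb]
  ring

/-- Kullback--Leibler divergence between two densities on `(0, ∞)` (i.e. `∫₀^∞`). -/
noncomputable def klDivPos (f g : ℝ → ℝ) : ℝ :=
  ∫ x in Set.Ioi (0:ℝ), f x * Real.log (f x / g x)

/-- Lognormal density with log-scale `μ` and precision-type parameter `τ`. -/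
noncomputable def lognormalPdf (μ τ : ℝ) (x : ℝ) : ℝ :=
  (1 / x) * Real.sqrt (τ / (2 * Real.pi)) * Real.exp (-(τ * (Real.log x - μ) ^ 2) / 2)

/-- Weibull density with scale `λ` and shape `κ` (real powers). -/
noncomputable def weibullPdf (lam κ : ℝ) (x : ℝ) : ℝ :=
  (κ / lam) * (x / lam) ^ (κ - 1) * Real.exp (-((x / lam) ^ κ))


lemma pointwise (μ τ lam κ : ℝ) (hτ : 0 < τ) (hlam : 0 < lam) (hκ : 0 < κ) (y : ℝ) :
    Real.exp y * (lognormalPdf μ τ (Real.exp y) *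
        Real.log (lognormalPdf μ τ (Real.exp y) / weibullPdf lam κ (Real.exp y)))
      = Real.sqrt (τ/(2*π)) * (Real.exp (-(τ/2)*(y-μ)^2) *
          ((Real.log (Real.sqrt (τ/(2*π))) - Real.log κ + κ*Real.log lam) + (-κ)*y
            + (-(τ/2))*(y-μ)^2 + Real.exp (κ*y + (-κ)*Real.log lam))) := by
  have hx : (0:ℝ) < Real.exp y := Real.exp_pos y
  have hA : (0:ℝ) < Real.sqrt (τ/(2*π)) := Real.sqrt_pos.mpr (by positivity)
  set A := Real.sqrt (τ/(2*π)) with hAdef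
  have hf1 : lognormalPdf μ τ (Real.exp y) = A * Real.exp (-(τ*(y-μ)^2)/2 + -y) := by
    rw [lognormalPdf, Real.log_exp, Real.exp_add, Real.exp_neg, one_div]
    ring
  have hf2 : weibullPdf lam κ (Real.exp y) =
      (κ/lam) * Real.exp ((κ-1)*(y - Real.log lam) - Real.exp (κ*y + (-κ)*Real.log lam)) := by
    rw [weibullPdf]
    have hb : (0:ℝ) < Real.exp y / lam := div_pos hx hlam
    have hlog : Real.log (Real.exp y / lam) = y - Real.log lam := by
      rw [Real.log_div (Real.exp_ne_zero y) hlam.ne', Real.log_exp]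
    rw [Real.rpow_def_of_pos hb, Real.rpow_def_of_pos hb, hlog,
      show κ*y + (-κ)*Real.log lam = (y - Real.log lam)*κ by ring,
      Real.exp_sub, show (κ-1)*(y - Real.log lam) = (y - Real.log lam)*(κ-1) by ring,
      Real.exp_neg]
    ring
  have hf1pos : 0 < lognormalPdf μ τ (Real.exp y) := by
    rw [hf1]; positivity
  have hf2pos : 0 < weibullPdf lam κ (Real.exp y) := by
    rw [hf2]; positivity
  have hlog : Real.log (lognormalPdf μ τ (Real.exp y) / weibullPdf lam κ (Real.exp y))
      = (Real.log A - Real.log κ + κ*Real.log lam) + (-κ)*y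
            + (-(τ/2))*(y-μ)^2 + Real.exp (κ*y + (-κ)*Real.log lam) := by
    rw [Real.log_div hf1pos.ne' hf2pos.ne', hf1, hf2,
      Real.log_mul hA.ne' (Real.exp_ne_zero _),
      Real.log_mul (by positivity : (κ/lam) ≠ 0) (Real.exp_ne_zero _),
      Real.log_exp, Real.log_exp, Real.log_div hκ.ne' hlam.ne']
    ring
  rw [hlog, hf1]
  rw [show -(τ*(y-μ)^2)/2 + -y = (-(τ/2)*(y-μ)^2) + -y by ring, Real.exp_add,
    Real.exp_neg y]
  field_simp

/-- the Kullback--Leibler divergence from the lognormal(μ, τ) density to the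
Weibull(λ, κ) density is
`−μ + (1/2) log(τ/(2π)) − 1/2 − log κ + log λ − (κ − 1)(μ − log λ) + λ^{−κ} exp(κ²/(2τ) + μκ)`. -/
theorem kl_lognormal_weibull (μ τ lam κ : ℝ) (hτ : 0 < τ) (hlam : 0 < lam) (hκ : 0 < κ) :
    klDivPos (lognormalPdf μ τ) (weibullPdf lam κ) =
      -μ + (1 / 2) * Real.log (τ / (2 * Real.pi)) - 1 / 2 - Real.log κ + Real.log lam -
        (κ - 1) * (μ - Real.log lam) + lam ^ (-κ) * Real.exp (κ ^ 2 / (2 * τ) + μ * κ) := by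
  have hb : (0:ℝ) < τ/2 := by positivity
  -- change of variables x = exp y
  have hcv := integral_image_eq_integral_abs_deriv_smul (s := (Set.univ : Set ℝ))
    (f := Real.exp) (f' := Real.exp) MeasurableSet.univ
    (fun x _ => (Real.hasDerivAt_exp x).hasDerivWithinAt)
    (Real.exp_injective.injOn)
    (fun x => lognormalPdf μ τ x * Real.log (lognormalPdf μ τ x / weibullPdf lam κ x))
  rw [Set.image_univ, Real.range_exp] at hcv
  rw [klDivPos, hcv, Measure.restrict_univ]
  have hpt : ∀ y : ℝ, |Real.exp y| • (lognormalPdf μ τ (Real.exp y) *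
        Real.log (lognormalPdf μ τ (Real.exp y) / weibullPdf lam κ (Real.exp y)))
      = Real.sqrt (τ/(2*π)) * (Real.exp (-(τ/2)*(y-μ)^2) *
          ((Real.log (Real.sqrt (τ/(2*π))) - Real.log κ + κ*Real.log lam) + (-κ)*y
            + (-(τ/2))*(y-μ)^2 + Real.exp (κ*y + (-κ)*Real.log lam))) := by
    intro y
    rw [smul_eq_mul, abs_of_pos (Real.exp_pos y)]
    exact pointwise μ τ lam κ hτ hlam hκ y
  simp_rw [hpt]
  rw [integral_const_mul, gauss_total (τ/2) μ _ (-κ) (-(τ/2)) κ ((-κ)*Real.log lam) hb]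
  -- now pure algebra
  have hπ : (0:ℝ) < π := Real.pi_pos
  have hAs : Real.sqrt (τ/(2*π)) * Real.sqrt (π/(τ/2)) = 1 := by
    rw [← Real.sqrt_mul (by positivity) _,
      show τ/(2*π) * (π/(τ/2)) = 1 by field_simp, Real.sqrt_one]
  have hlogA : Real.log (Real.sqrt (τ/(2*π))) = (1/2) * Real.log (τ/(2*π)) := by
    rw [Real.log_sqrt (by positivity)]; ring
  have hrpow : lam ^ (-κ) = Real.exp ((-κ) * Real.log lam) := by
    rw [Real.rpow_def_of_pos hlam]; ring_nf
  have hexp : κ^2/(4*(τ/2)) + μ*κ = κ^2/(2*τ) + μ*κ := by ring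
  set S := Real.sqrt (π/(τ/2)) with hS
  set B := Real.sqrt (τ/(2*π)) with hB
  rw [hexp, hrpow, hlogA]
  rw [show B * ((1/2 * Real.log (τ/(2*π)) - Real.log κ + κ*Real.log lam) * S
        + (-κ) * (μ * S) + (-(τ/2)) * (S/(2*(τ/2)))
        + Real.exp ((-κ)*Real.log lam) * (S * Real.exp (κ^2/(2*τ) + μ*κ)))
      = (B*S) * (1/2 * Real.log (τ/(2*π)) - Real.log κ + κ*Real.log lam)
        + (B*S) * ((-κ)*μ) + (B*S) * ((-(τ/2))/(2*(τ/2)))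
        + (B*S) * (Real.exp ((-κ)*Real.log lam) * Real.exp (κ^2/(2*τ) + μ*κ)) from by
      ring, hAs]
  have hτ' : τ ≠ 0 := hτ.ne'
  field_simp
  ring
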